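/- Let k ≥ 1 and let Z be a k×k complex matrix such that Zᴴ·Z − I is positive semidefinite. Then Z·Zᴴ − I is positive semidefinite; consequently, for every density matrix ρ ∈ M_k(ℂ) one has Re tr(ρ·Z·Zᴴ) ≥ 1. -/

import Mathlib

open Matrix ComplexOrder

lemma psd_trace_nonneg {k : ℕ} {P : Matrix (Fin k) (Fin k) ℂ} (hP : P.PosSemidef) :
    0 ≤ P.trace := by
  rw [Matrix.trace]
  refine Finset.sum_nonneg fun i _ => ?_
  exact hP.diag_nonneg

open scoped MatrixOrder in
lemma psd_sqrt_aux {k : ℕ} {B : Matrix (Fin k) (Fin k) ℂ} (hB : B.PosSemidef) :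
    ∃ R : Matrix (Fin k) (Fin k) ℂ, R * R = B ∧ R.IsHermitian :=
  ⟨CFC.sqrt B, CFC.sqrt_mul_sqrt_self B hB.nonneg, (CFC.sqrt_nonneg B).posSemidef.1⟩

lemma psd_eq_ct_mul_self_aux {k : ℕ} {B : Matrix (Fin k) (Fin k) ℂ} (hB : B.PosSemidef) :
    ∃ R : Matrix (Fin k) (Fin k) ℂ, B = Rᴴ * R := by
  obtain ⟨R, hRR, hR⟩ := psd_sqrt_aux hB
  exact ⟨R, by rw [hR.eq, hRR]⟩

/-- If `Z` is a `k × k` complex matrix with `Zᴴ * Z - 1 ⪰ 0`, then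
`Z * Zᴴ - 1 ⪰ 0`; consequently for every density matrix `ρ` one has
`Re tr(ρ * Z * Zᴴ) ≥ 1`. -/
theorem zmul_psd_of_mulz_psd (k : ℕ) (hk : 1 ≤ k) (Z : Matrix (Fin k) (Fin k) ℂ)
    (hZ : (Zᴴ * Z - 1).PosSemidef) :
    (Z * Zᴴ - 1).PosSemidef ∧
      ∀ ρ : Matrix (Fin k) (Fin k) ℂ, ρ.PosSemidef → ρ.trace = 1 →
        1 ≤ ((ρ * (Z * Zᴴ)).trace).re := by
  set A := Zᴴ * Z with hA_def
  have hA : A.PosDef := by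
    have h := Matrix.PosDef.one.add_posSemidef hZ
    simpa using h
  -- Z is invertible
  have hdetA : IsUnit A.det := hA.isUnit.map (detMonoidHom)
  have hdetZ : IsUnit Z.det := by
    rw [hA_def, Matrix.det_mul] at hdetA
    exact isUnit_of_mul_isUnit_right hdetA
  have hdetZH : IsUnit Zᴴ.det := by
    rw [hA_def, Matrix.det_mul] at hdetA
    exact isUnit_of_mul_isUnit_left hdetA
  -- A⁻¹ is positive definite, take its square root R
  have hAinv : A⁻¹.PosDef := hA.inv
  obtain ⟨R, hRR, hRherm⟩ := psd_sqrt_aux hAinv.posSemidef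
  have hdetR : IsUnit R.det := by
    have : R.det * R.det = A⁻¹.det := by rw [← Matrix.det_mul, hRR]
    have hdetAinv : IsUnit A⁻¹.det := hA.inv.isUnit.map (detMonoidHom)
    rw [← this] at hdetAinv
    exact isUnit_of_mul_isUnit_left hdetAinv
  -- R * A * R = 1
  have hRAR : R * A * R = 1 := by
    have hAeq : A = (R * R)⁻¹ := by rw [hRR, Matrix.nonsing_inv_nonsing_inv _ hdetA]
    rw [hAeq, Matrix.mul_inv_rev, ← Matrix.mul_assoc, Matrix.mul_assoc (R * R⁻¹),
      Matrix.nonsing_inv_mul _ hdetR, Matrix.mul_nonsing_inv _ hdetR, Matrix.mul_one]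
  -- 1 - A⁻¹ is PSD
  have key : (1 - A⁻¹).PosSemidef := by
    have h := hZ.conjTranspose_mul_mul_same R
    rw [hRherm.eq] at h
    have heq : R * (Zᴴ * Z - 1) * R = 1 - A⁻¹ := by
      rw [← hA_def, Matrix.mul_sub, Matrix.mul_one, Matrix.sub_mul, hRAR, hRR]
    rwa [heq] at h
  -- conjugate by Z: Z * (1 - A⁻¹) * Zᴴ = Z * Zᴴ - 1
  have main : (Z * Zᴴ - 1).PosSemidef := by
    have h := key.mul_mul_conjTranspose_same Z
    have heq : Z * (1 - A⁻¹) * Zᴴ = Z * Zᴴ - 1 := by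
      rw [Matrix.mul_sub, Matrix.mul_one, Matrix.sub_mul, hA_def, Matrix.mul_inv_rev,
        ← Matrix.mul_assoc Z Z⁻¹, Matrix.mul_nonsing_inv _ hdetZ, Matrix.one_mul,
        Matrix.nonsing_inv_mul _ hdetZH]
    rwa [heq] at h
  refine ⟨main, fun ρ hρ hρtr => ?_⟩
  obtain ⟨B, hB⟩ := psd_eq_ct_mul_self_aux hρ
  have htr : 0 ≤ (ρ * (Z * Zᴴ - 1)).trace := by
    have hpsd : (B * (Z * Zᴴ - 1) * Bᴴ).PosSemidef := main.mul_mul_conjTranspose_same B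
    have := psd_trace_nonneg hpsd
    rwa [Matrix.trace_mul_cycle, ← hB] at this
  rw [Matrix.mul_sub, Matrix.mul_one, Matrix.trace_sub, hρtr] at htr
  rw [Complex.le_def] at htr
  simp only [Complex.zero_re, Complex.sub_re, Complex.one_re] at htr
  linarith [htr.1]
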